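/- arXiv:2503.16209 — 2 statements merged into one kernel-verified Lean document; each statement's English description precedes it below -/
import Mathlib

section
/- Let A ∈ ℂ^{m×N} satisfy the ℓ_2-robust null space property of order n with constants ρ ∈ (0,1) and τ > 0, and let λ ≥ ((3+ρ)/(1+ρ))·τ·√n. Then there is a constant C > 0 depending only on ρ and τ such that for every y ∈ ℂ^m, every minimizer r of the map z ↦ ‖z‖_{ℓ_1} + λ‖y − Az‖_{ℓ_2} over ℂ^N satisfies, for p ∈ {1,2} and all v ∈ ℂ^N, ‖v − r‖_{ℓ_p} ≤ C ( n^{1/p−1} σ_n(v)_{ℓ_1} + (λ n^{1/p−1} + n^{1−p/2}) ‖y − Av‖_{ℓ_2} ). -/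
open scoped BigOperators
open scoped Classical

/-- The `ℓ_p` norm of a finite complex vector. -/
noncomputable def lpNorm {ι : Type*} [Fintype ι] (p : ℝ) (v : ι → ℂ) : ℝ :=
  (∑ i, ‖v i‖ ^ p) ^ (1 / p)

/-- Number of nonzero entries of a vector. -/
noncomputable def sparsity {ι : Type*} [Fintype ι] (v : ι → ℂ) : ℕ :=
  (Finset.univ.filter fun i => v i ≠ 0).card

/-- Best `n`-term approximation error of `v` in `ℓ_p`. -/
noncomputable def bestApprox {ι : Type*} [Fintype ι] (n : ℕ) (p : ℝ) (v : ι → ℂ) : ℝ :=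
  sInf {t : ℝ | ∃ z : ι → ℂ, sparsity z ≤ n ∧ t = lpNorm p (v - z)}

/-- `A` satisfies the restricted isometry property of order `n` with constant `δ`. -/
def HasRIP {m : ℕ} {ι : Type*} [Fintype ι] (A : Matrix (Fin m) ι ℂ) (n : ℕ) (δ : ℝ) : Prop :=
  ∀ v : ι → ℂ, sparsity v ≤ n →
    (1 - δ) * lpNorm 2 v ^ 2 ≤ lpNorm 2 (A.mulVec v) ^ 2 ∧
      lpNorm 2 (A.mulVec v) ^ 2 ≤ (1 + δ) * lpNorm 2 v ^ 2

/-- `A` satisfies the `ℓ₂`-robust null space property of order `n`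
with constants `ρ` and `τ`. -/
def HasNSP {m : ℕ} {ι : Type*} [Fintype ι] (A : Matrix (Fin m) ι ℂ) (n : ℕ) (ρ τ : ℝ) : Prop :=
  ∀ (v : ι → ℂ) (S : Finset ι), S.card ≤ n →
    lpNorm 2 (fun i => if i ∈ S then v i else 0) ≤
      ρ * (n : ℝ) ^ (-(1 : ℝ) / 2) * lpNorm 1 (fun i => if i ∈ S then 0 else v i) +
        τ * lpNorm 2 (A.mulVec v)

/-! ### Auxiliary lemmas -/

section Aux

set_option linter.unusedSectionVars false

variable {ι : Type*} [Fintype ι]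

lemma lpNorm_one_eq (v : ι → ℂ) : lpNorm 1 v = ∑ i, ‖v i‖ := by
  simp [lpNorm]

lemma lpNorm_two_eq (v : ι → ℂ) : lpNorm 2 v = Real.sqrt (∑ i, ‖v i‖^2) := by
  rw [lpNorm, Real.sqrt_eq_rpow]
  norm_num [Real.rpow_two]

lemma lpNorm_two_eq_norm (v : ι → ℂ) :
    lpNorm 2 v = ‖(WithLp.equiv 2 (ι → ℂ)).symm v‖ := by
  rw [lpNorm_two_eq, EuclideanSpace.norm_eq]; rfl

lemma lpNorm_one_nonneg (v : ι → ℂ) : 0 ≤ lpNorm 1 v := by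
  rw [lpNorm_one_eq]; positivity

lemma lpNorm_two_nonneg (v : ι → ℂ) : 0 ≤ lpNorm 2 v := by
  rw [lpNorm_two_eq]; positivity

lemma lpNorm_two_add_le (u w : ι → ℂ) :
    lpNorm 2 (u + w) ≤ lpNorm 2 u + lpNorm 2 w := by
  simp only [lpNorm_two_eq_norm]
  exact norm_add_le _ _

lemma lpNorm_two_neg (v : ι → ℂ) : lpNorm 2 (-v) = lpNorm 2 v := by
  simp only [lpNorm_two_eq]
  congr 1; exact Finset.sum_congr rfl fun i _ => by simp

lemma lpNorm_two_sub_comm (u w : ι → ℂ) : lpNorm 2 (u - w) = lpNorm 2 (w - u) := by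
  rw [← lpNorm_two_neg (u - w), neg_sub]

/-- Cauchy-Schwarz: `∑_{i∈S} ‖v i‖ ≤ √|S| * √(∑_{i∈S} ‖v i‖²)`. -/
lemma sum_norm_le_sqrt_card_mul (S : Finset ι) (v : ι → ℂ) :
    ∑ i ∈ S, ‖v i‖ ≤ Real.sqrt S.card * Real.sqrt (∑ i ∈ S, ‖v i‖^2) := by
  have h := Finset.sum_mul_sq_le_sq_mul_sq S (fun _ => (1:ℝ)) (fun i => ‖v i‖)
  simp only [one_mul, one_pow, Finset.sum_const, nsmul_eq_mul, mul_one] at h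
  have h1 : (0:ℝ) ≤ ∑ i ∈ S, ‖v i‖ := by positivity
  calc ∑ i ∈ S, ‖v i‖ = Real.sqrt ((∑ i ∈ S, ‖v i‖)^2) := (Real.sqrt_sq h1).symm
    _ ≤ Real.sqrt ((S.card : ℝ) * ∑ i ∈ S, ‖v i‖^2) := Real.sqrt_le_sqrt h
    _ = _ := by rw [Real.sqrt_mul (by positivity)]

lemma restr_norm_one (S : Finset ι) (v : ι → ℂ) :
    lpNorm 1 (fun i => if i ∈ S then 0 else v i) = ∑ i ∈ Sᶜ, ‖v i‖ := by
  rw [lpNorm_one_eq]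
  simp only [apply_ite norm, norm_zero]
  rw [Finset.sum_ite, Finset.sum_const_zero, zero_add]
  congr 1; ext i; simp

lemma restr_norm_two (S : Finset ι) (v : ι → ℂ) :
    lpNorm 2 (fun i => if i ∈ S then v i else 0) = Real.sqrt (∑ i ∈ S, ‖v i‖^2) := by
  rw [lpNorm_two_eq]
  congr 1
  simp only [apply_ite norm, norm_zero]
  rw [← Finset.sum_filter_add_sum_filter_not Finset.univ (· ∈ S)]
  have h1 : ∀ i ∈ Finset.univ.filter (· ∈ S), (if i ∈ S then ‖v i‖ else 0)^2 = ‖v i‖^2 := by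
    intro i hi; simp at hi; simp [hi]
  have h2 : ∀ i ∈ Finset.univ.filter (¬ · ∈ S), (if i ∈ S then ‖v i‖ else 0)^2 = 0 := by
    intro i hi; simp at hi; simp [hi]
  rw [Finset.sum_congr rfl h1, Finset.sum_congr rfl h2, Finset.sum_const_zero, add_zero]
  congr 1; ext i; simp

lemma restr_corestr_norm_two (S : Finset ι) (v : ι → ℂ) :
    lpNorm 2 (fun i => if i ∈ S then 0 else v i) = Real.sqrt (∑ i ∈ Sᶜ, ‖v i‖^2) := by
  rw [lpNorm_two_eq]
  congr 1
  simp only [apply_ite norm, norm_zero]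
  rw [← Finset.sum_filter_add_sum_filter_not Finset.univ (· ∈ S)]
  have h1 : ∀ i ∈ Finset.univ.filter (· ∈ S), (if i ∈ S then 0 else ‖v i‖)^2 = 0 := by
    intro i hi; simp at hi; simp [hi]
  have h2 : ∀ i ∈ Finset.univ.filter (¬ · ∈ S), (if i ∈ S then 0 else ‖v i‖)^2 = ‖v i‖^2 := by
    intro i hi; simp at hi; simp [hi]
  rw [Finset.sum_congr rfl h1, Finset.sum_congr rfl h2, Finset.sum_const_zero, zero_add]
  congr 1; ext i; simp

lemma sum_norm_split (S : Finset ι) (v : ι → ℂ) :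
    ∑ i, ‖v i‖ = ∑ i ∈ S, ‖v i‖ + ∑ i ∈ Sᶜ, ‖v i‖ :=
  (Finset.sum_add_sum_compl S _).symm

lemma rpow_neg_half_eq (n : ℕ) : ((n:ℝ)) ^ (-(1:ℝ)/2) = (Real.sqrt n)⁻¹ := by
  rw [neg_div, Real.rpow_neg (Nat.cast_nonneg n), Real.sqrt_eq_rpow]

lemma exists_S_bestApprox (n : ℕ) (v : ι → ℂ) :
    ∃ S : Finset ι, S.card ≤ n ∧ (∑ i ∈ Sᶜ, ‖v i‖) ≤ bestApprox n 1 v := by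
  obtain ⟨S, hSmem, hSmin⟩ := Finset.exists_min_image
    ((Finset.univ : Finset ι).powerset.filter (fun s => s.card ≤ n))
    (fun s => ∑ i ∈ sᶜ, ‖v i‖)
    ⟨∅, by simp⟩
  have hScard : S.card ≤ n := (Finset.mem_filter.mp hSmem).2
  refine ⟨S, hScard, ?_⟩
  have hne : {t : ℝ | ∃ z : ι → ℂ, sparsity z ≤ n ∧ t = lpNorm 1 (v - z)}.Nonempty :=
    ⟨lpNorm 1 v, 0, by simp [sparsity], by simp⟩
  apply le_csInf hne
  rintro t ⟨z, hz, rfl⟩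
  set T := Finset.univ.filter (fun i => z i ≠ 0) with hT
  have hTmem : T ∈ (Finset.univ : Finset ι).powerset.filter (fun s => s.card ≤ n) := by
    simp [hT, sparsity] at hz ⊢; exact hz
  calc ∑ i ∈ Sᶜ, ‖v i‖ ≤ ∑ i ∈ Tᶜ, ‖v i‖ := hSmin T hTmem
    _ = ∑ i ∈ Tᶜ, ‖(v - z) i‖ := by
        apply Finset.sum_congr rfl
        intro i hi
        have : z i = 0 := by
          by_contra h
          exact (Finset.mem_compl.mp hi) (by simp [hT, h])
        simp [this]
    _ ≤ ∑ i, ‖(v - z) i‖ := Finset.sum_le_sum_of_subset_of_nonneg (Finset.subset_univ _)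
        (fun i _ _ => norm_nonneg _)
    _ = lpNorm 1 (v - z) := (lpNorm_one_eq _).symm

/-- Stechkin-type bound: there is a set `S` of at most `n` coordinates such that
the `ℓ₂` norm of `w` off `S` is at most `n^{-1/2} ‖w‖₁`. -/
lemma exists_good_S (n : ℕ) (hn : 0 < n) (w : ι → ℂ) :
    ∃ S : Finset ι, S.card ≤ n ∧
      Real.sqrt (∑ i ∈ Sᶜ, ‖w i‖^2) ≤ (Real.sqrt n)⁻¹ * ∑ i, ‖w i‖ := by
  by_cases hcard : Fintype.card ι ≤ n
  · refine ⟨Finset.univ, by simpa using hcard, ?_⟩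
    simp only [Finset.compl_univ, Finset.sum_empty, Real.sqrt_zero]
    positivity
  push_neg at hcard
  have hn' : n ≤ (Finset.univ : Finset ι).card := by
    simpa using hcard.le
  obtain ⟨S, hSmem, hSmax⟩ := Finset.exists_max_image
    ((Finset.univ : Finset ι).powerset.filter (fun s => s.card = n))
    (fun s => ∑ i ∈ s, ‖w i‖)
    (by
      obtain ⟨t, _, ht⟩ := Finset.exists_subset_card_eq hn'
      exact ⟨t, by simp [ht]⟩)
  have hScard : S.card = n := (Finset.mem_filter.mp hSmem).2
  refine ⟨S, hScard.le, ?_⟩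
  have key : ∀ i ∉ S, ∀ j ∈ S, ‖w i‖ ≤ ‖w j‖ := by
    intro i hi j hj
    have hij : i ≠ j := fun h => hi (h ▸ hj)
    set S' := insert i (S.erase j) with hS'
    have hiS' : i ∉ S.erase j := fun h => hi (Finset.mem_of_mem_erase h)
    have hS'card : S'.card = n := by
      rw [hS', Finset.card_insert_of_notMem hiS', Finset.card_erase_of_mem hj, hScard]
      omega
    have hmem : S' ∈ (Finset.univ : Finset ι).powerset.filter (fun s => s.card = n) := by
      simp [hS'card]
    have h := hSmax S' hmem
    rw [hS', Finset.sum_insert hiS'] at h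
    have herase : ∑ x ∈ S.erase j, ‖w x‖ + ‖w j‖ = ∑ x ∈ S, ‖w x‖ :=
      Finset.sum_erase_add S _ hj
    linarith
  set T := ∑ j ∈ S, ‖w j‖ with hTdef
  have hTle : T ≤ ∑ i, ‖w i‖ := Finset.sum_le_sum_of_subset_of_nonneg (Finset.subset_univ _)
    (fun i _ _ => norm_nonneg _)
  have hout : ∀ i ∈ Sᶜ, (n:ℝ) * ‖w i‖ ≤ T := by
    intro i hi
    have hi' : i ∉ S := Finset.mem_compl.mp hi
    calc (n:ℝ) * ‖w i‖ = ∑ _j ∈ S, ‖w i‖ := by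
          rw [Finset.sum_const, hScard, nsmul_eq_mul]
      _ ≤ T := Finset.sum_le_sum (fun j hj => key i hi' j hj)
  have hsq : ∑ i ∈ Sᶜ, ‖w i‖^2 ≤ (T / n) * ∑ i ∈ Sᶜ, ‖w i‖ := by
    rw [Finset.mul_sum]
    apply Finset.sum_le_sum
    intro i hi
    have h1 : ‖w i‖ ≤ T / n := by
      rw [le_div_iff₀ (by exact_mod_cast hn)]
      linarith [hout i hi]
    calc ‖w i‖^2 = ‖w i‖ * ‖w i‖ := sq ‖w i‖
      _ ≤ (T/n) * ‖w i‖ := mul_le_mul_of_nonneg_right h1 (norm_nonneg _)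
  have hScle : ∑ i ∈ Sᶜ, ‖w i‖ ≤ ∑ i, ‖w i‖ := Finset.sum_le_sum_of_subset_of_nonneg
    (Finset.subset_univ _) (fun i _ _ => norm_nonneg _)
  have hfull : (0:ℝ) ≤ ∑ i, ‖w i‖ := by positivity
  have hbound : ∑ i ∈ Sᶜ, ‖w i‖^2 ≤ (∑ i, ‖w i‖)^2 / n := by
    have hTn : 0 ≤ T / n := by
      apply div_nonneg _ (by positivity)
      rw [hTdef]; positivity
    calc ∑ i ∈ Sᶜ, ‖w i‖^2 ≤ (T/n) * ∑ i ∈ Sᶜ, ‖w i‖ := hsq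
      _ ≤ ((∑ i, ‖w i‖)/n) * ∑ i, ‖w i‖ := by
          apply mul_le_mul _ hScle (by positivity) (div_nonneg hfull (by positivity))
          exact (div_le_div_iff_of_pos_right (by exact_mod_cast hn)).mpr hTle
      _ = (∑ i, ‖w i‖)^2 / n := by ring
  calc Real.sqrt (∑ i ∈ Sᶜ, ‖w i‖^2) ≤ Real.sqrt ((∑ i, ‖w i‖)^2 / n) := Real.sqrt_le_sqrt hbound
    _ = (Real.sqrt n)⁻¹ * ∑ i, ‖w i‖ := by
        rw [Real.sqrt_div (sq_nonneg _), Real.sqrt_sq hfull, div_eq_inv_mul]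

lemma nsp_l2 {m : ℕ} (A : Matrix (Fin m) ι ℂ) (n : ℕ) (ρ τ : ℝ)
    (hA : HasNSP A n ρ τ) (u : ι → ℂ) (S : Finset ι) (hS : S.card ≤ n) :
    Real.sqrt (∑ i ∈ S, ‖u i‖^2) ≤
      ρ * (Real.sqrt n)⁻¹ * (∑ i ∈ Sᶜ, ‖u i‖) + τ * lpNorm 2 (A.mulVec u) := by
  have h := hA u S hS
  rwa [restr_norm_one, restr_norm_two, rpow_neg_half_eq] at h

lemma nsp_l1 {m : ℕ} (A : Matrix (Fin m) ι ℂ) (n : ℕ) (hn : 0 < n) (ρ τ : ℝ)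
    (hA : HasNSP A n ρ τ) (u : ι → ℂ) (S : Finset ι) (hS : S.card ≤ n) :
    ∑ i ∈ S, ‖u i‖ ≤
      ρ * (∑ i ∈ Sᶜ, ‖u i‖) + τ * Real.sqrt n * lpNorm 2 (A.mulVec u) := by
  have hsqn : (0:ℝ) < Real.sqrt n := Real.sqrt_pos.mpr (by exact_mod_cast hn)
  have h2 := nsp_l2 A n ρ τ hA u S hS
  have hcard : Real.sqrt S.card ≤ Real.sqrt n := Real.sqrt_le_sqrt (by exact_mod_cast hS)
  calc ∑ i ∈ S, ‖u i‖ ≤ Real.sqrt S.card * Real.sqrt (∑ i ∈ S, ‖u i‖^2) :=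
        sum_norm_le_sqrt_card_mul S u
    _ ≤ Real.sqrt n * Real.sqrt (∑ i ∈ S, ‖u i‖^2) :=
        mul_le_mul_of_nonneg_right hcard (Real.sqrt_nonneg _)
    _ ≤ Real.sqrt n * (ρ * (Real.sqrt n)⁻¹ * (∑ i ∈ Sᶜ, ‖u i‖) + τ * lpNorm 2 (A.mulVec u)) :=
        mul_le_mul_of_nonneg_left h2 hsqn.le
    _ = ρ * (Real.sqrt n * (Real.sqrt n)⁻¹) * (∑ i ∈ Sᶜ, ‖u i‖)
          + τ * Real.sqrt n * lpNorm 2 (A.mulVec u) := by ring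
    _ = _ := by rw [mul_inv_cancel₀ hsqn.ne', mul_one]


lemma compl_eq_of_iff (S Sc : Finset ι) (h : ∀ i, i ∈ Sc ↔ i ∉ S) : Sc = Sᶜ := by
  ext i; simp [h i]

lemma sum_split' (S Sc : Finset ι) (h : ∀ i, i ∈ Sc ↔ i ∉ S) (u : ι → ℂ) :
    ∑ i, ‖u i‖ = ∑ i ∈ S, ‖u i‖ + ∑ i ∈ Sc, ‖u i‖ := by
  have hc := compl_eq_of_iff S Sc h
  subst hc
  exact sum_norm_split S u

lemma exists_S_bestApprox' (n : ℕ) (v : ι → ℂ) :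
    ∃ S Sc : Finset ι, S.card ≤ n ∧ (∀ i, i ∈ Sc ↔ i ∉ S) ∧
      (∑ i ∈ Sc, ‖v i‖) ≤ bestApprox n 1 v := by
  obtain ⟨S, h1, h2⟩ := exists_S_bestApprox n v
  exact ⟨S, Sᶜ, h1, fun i => Finset.mem_compl, h2⟩

lemma exists_good_S' (n : ℕ) (hn : 0 < n) (w : ι → ℂ) :
    ∃ S Sc : Finset ι, S.card ≤ n ∧ (∀ i, i ∈ Sc ↔ i ∉ S) ∧
      Real.sqrt (∑ i ∈ Sc, ‖w i‖^2) ≤ (Real.sqrt n)⁻¹ * ∑ i, ‖w i‖ := by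
  obtain ⟨S, h1, h2⟩ := exists_good_S n hn w
  exact ⟨S, Sᶜ, h1, fun i => Finset.mem_compl, h2⟩

lemma nsp_l2' {m : ℕ} (A : Matrix (Fin m) ι ℂ) (n : ℕ) (ρ τ : ℝ)
    (hA : HasNSP A n ρ τ) (u : ι → ℂ) (S Sc : Finset ι)
    (hcompl : ∀ i, i ∈ Sc ↔ i ∉ S) (hS : S.card ≤ n) :
    Real.sqrt (∑ i ∈ S, ‖u i‖^2) ≤
      ρ * (Real.sqrt n)⁻¹ * (∑ i ∈ Sc, ‖u i‖) + τ * lpNorm 2 (A.mulVec u) := by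
  have hc := compl_eq_of_iff S Sc hcompl
  subst hc
  exact nsp_l2 A n ρ τ hA u S hS

lemma nsp_l1' {m : ℕ} (A : Matrix (Fin m) ι ℂ) (n : ℕ) (hn : 0 < n) (ρ τ : ℝ)
    (hA : HasNSP A n ρ τ) (u : ι → ℂ) (S Sc : Finset ι)
    (hcompl : ∀ i, i ∈ Sc ↔ i ∉ S) (hS : S.card ≤ n) :
    ∑ i ∈ S, ‖u i‖ ≤
      ρ * (∑ i ∈ Sc, ‖u i‖) + τ * Real.sqrt n * lpNorm 2 (A.mulVec u) := by
  have hc := compl_eq_of_iff S Sc hcompl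
  subst hc
  exact nsp_l1 A n hn ρ τ hA u S hS

lemma lpNorm_two_split_le (S Sc : Finset ι) (hcompl : ∀ i, i ∈ Sc ↔ i ∉ S) (w : ι → ℂ) :
    lpNorm 2 w ≤ Real.sqrt (∑ i ∈ S, ‖w i‖^2) + Real.sqrt (∑ i ∈ Sc, ‖w i‖^2) := by
  have hc := compl_eq_of_iff S Sc hcompl
  subst hc
  have hdecomp : w = (fun i => if i ∈ S then w i else 0)
      + (fun i => if i ∈ S then 0 else w i) := by
    funext i; by_cases h : i ∈ S <;> simp [h]
  calc lpNorm 2 w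
      = lpNorm 2 ((fun i => if i ∈ S then w i else 0)
          + (fun i => if i ∈ S then 0 else w i)) := by rw [← hdecomp]
    _ ≤ lpNorm 2 (fun i => if i ∈ S then w i else 0)
          + lpNorm 2 (fun i => if i ∈ S then 0 else w i) := lpNorm_two_add_le _ _
    _ = _ := by rw [restr_norm_two, restr_corestr_norm_two]

end Aux

lemma arithL1 (ρ τ lam sqn E F σ a b G : ℝ)
    (hρ0 : 0 < ρ) (hρ1 : ρ < 1) (hτ : 0 < τ) (hsqn : 0 < sqn)
    (hE : 0 ≤ E) (hF : 0 ≤ F) (hσ : 0 ≤ σ)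
    (hlam2 : 2*τ*sqn ≤ (1+ρ)*lam) (hlam0 : 0 < lam)
    (h1 : b ≤ (lam*E - lam*F) + 2*σ + a)
    (h2 : a ≤ ρ*b + τ*sqn*G)
    (hG : G ≤ E + F) :
    a + b ≤ ((3+3*ρ+2*τ)/(1-ρ)) * (σ + lam*E + sqn*E) := by
  have h1ρ : (0:ℝ) < 1 - ρ := by linarith
  have m1 : ρ*b ≤ ρ*((lam*E - lam*F) + 2*σ + a) := mul_le_mul_of_nonneg_left h1 hρ0.le
  have m2 : τ*sqn*G ≤ τ*sqn*(E + F) :=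
    mul_le_mul_of_nonneg_left hG (by positivity)
  have m3 : (0:ℝ) ≤ ((1+ρ)*lam - 2*τ*sqn) * F :=
    mul_nonneg (by linarith) hF
  have key : (a+b)*(1-ρ) ≤ (2+2*ρ)*σ + ((1+ρ)*lam)*E + (2*τ*sqn)*E := by
    nlinarith [m1, m2, m3, h1, h2]
  rw [div_mul_eq_mul_div, le_div_iff₀ h1ρ]
  have q1 : 0 ≤ (1+ρ+2*τ)*σ := mul_nonneg (by linarith) hσ
  have q2 : 0 ≤ (2+2*ρ+2*τ)*(lam*E) := mul_nonneg (by linarith) (by positivity)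
  have q3 : 0 ≤ (3+3*ρ)*(sqn*E) := mul_nonneg (by linarith) (by positivity)
  nlinarith [key, q1, q2, q3]

set_option maxHeartbeats 2000000 in
/-- **Recovery guarantees for Square Root Lasso under the NSP**
(Petersen–Jung / Adcock–Brugiapaglia–Webster).  If `A` satisfies the `ℓ₂`-robust NSP
of order `n` with constants `ρ ∈ (0,1)` and `τ > 0`, and `λ ≥ ((3+ρ)/(1+ρ))·τ·√n`,
then there is a constant `C > 0` depending only on `ρ` and `τ` such that every
minimizer `r` of `z ↦ ‖z‖₁ + λ‖y − Az‖₂` satisfies, for `p ∈ {1,2}` and all `v`,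
`‖v − r‖_p ≤ C ( n^{1/p−1} σ_n(v)₁ + (λ n^{1/p−1} + n^{1−p/2}) ‖y − Av‖₂ )`. -/
theorem stmt1 (ρ τ : ℝ) (hρ : ρ ∈ Set.Ioo (0 : ℝ) 1) (hτ : 0 < τ) :
    ∃ C > 0, ∀ (m N n : ℕ), 0 < n → ∀ A : Matrix (Fin m) (Fin N) ℂ,
      HasNSP A n ρ τ → ∀ lam : ℝ, lam ≥ ((3 + ρ) / (1 + ρ)) * τ * Real.sqrt n →
      ∀ (y : Fin m → ℂ) (r : Fin N → ℂ),
        (∀ z : Fin N → ℂ,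
          lpNorm 1 r + lam * lpNorm 2 (y - A.mulVec r) ≤
            lpNorm 1 z + lam * lpNorm 2 (y - A.mulVec z)) →
        ∀ p ∈ ({1, 2} : Set ℝ), ∀ v : Fin N → ℂ,
          lpNorm p (v - r) ≤
            C * ((n : ℝ) ^ (1 / p - 1) * bestApprox n 1 v +
              (lam * (n : ℝ) ^ (1 / p - 1) + (n : ℝ) ^ (1 - p / 2)) *
                lpNorm 2 (y - A.mulVec v)) := by
  obtain ⟨hρ0, hρ1⟩ := hρ
  have h1ρ : (0:ℝ) < 1 - ρ := by linarith
  obtain ⟨C₁, hC₁def⟩ : ∃ c : ℝ, c = (3+3*ρ+2*τ)/(1-ρ) := ⟨_, rfl⟩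
  have hC₁ : 0 < C₁ := by rw [hC₁def]; positivity
  obtain ⟨C, hCdef⟩ : ∃ c : ℝ, c = (2+ρ)*C₁ + 2*τ := ⟨_, rfl⟩
  have hC : 0 < C := by rw [hCdef]; positivity
  have hC₁C : C₁ ≤ C := by rw [hCdef]; nlinarith
  refine ⟨C, hC, ?_⟩
  intro m N n hn A hA lam hlam y r hr p hp v
  obtain ⟨sqn, hsqndef⟩ : ∃ s : ℝ, s = Real.sqrt (n:ℝ) := ⟨_, rfl⟩
  have hsqn : 0 < sqn := by
    rw [hsqndef]; exact Real.sqrt_pos.mpr (by exact_mod_cast hn)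
  rw [← hsqndef] at hlam
  obtain ⟨E, hEdef⟩ : ∃ x : ℝ, x = lpNorm 2 (y - A.mulVec v) := ⟨_, rfl⟩
  obtain ⟨F, hFdef⟩ : ∃ x : ℝ, x = lpNorm 2 (y - A.mulVec r) := ⟨_, rfl⟩
  obtain ⟨G, hGdef⟩ : ∃ x : ℝ, x = lpNorm 2 (A.mulVec (v - r)) := ⟨_, rfl⟩
  rw [← hEdef]
  have hE0 : 0 ≤ E := hEdef ▸ lpNorm_two_nonneg _
  have hF0 : 0 ≤ F := hFdef ▸ lpNorm_two_nonneg _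
  have hG0 : 0 ≤ G := hGdef ▸ lpNorm_two_nonneg _
  -- facts about lam
  have hlam0 : 0 < lam := by
    have h1 : (1:ℝ) ≤ (3+ρ)/(1+ρ) := by
      rw [le_div_iff₀ (by linarith)]; linarith
    nlinarith [mul_pos hτ hsqn]
  have hlam1 : τ * sqn ≤ lam := by
    have h1 : (1:ℝ) ≤ (3+ρ)/(1+ρ) := by
      rw [le_div_iff₀ (by linarith)]; linarith
    nlinarith [mul_pos hτ hsqn]
  have hlam2 : 2*τ*sqn ≤ (1+ρ)*lam := by
    have h3 : (1+ρ) * (((3+ρ)/(1+ρ)) * τ * sqn) ≤ (1+ρ) * lam :=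
      mul_le_mul_of_nonneg_left hlam (by linarith)
    have hpp : (1+ρ) * (1+ρ)⁻¹ = 1 := mul_inv_cancel₀ (by linarith : (1+ρ) ≠ 0)
    have h2 : (1+ρ) * (((3+ρ)/(1+ρ)) * τ * sqn) = (3+ρ) * (τ * sqn) := by
      linear_combination ((3+ρ)*τ*sqn) * hpp
    nlinarith [mul_pos hτ hsqn]
  -- triangle for the residuals
  have hGEF : G ≤ E + F := by
    have hsplit : A.mulVec (v - r) = (A.mulVec v - y) + (y - A.mulVec r) := by
      rw [Matrix.mulVec_sub]; abel
    calc G = lpNorm 2 ((A.mulVec v - y) + (y - A.mulVec r)) := by rw [hGdef, hsplit]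
      _ ≤ lpNorm 2 (A.mulVec v - y) + lpNorm 2 (y - A.mulVec r) := lpNorm_two_add_le _ _
      _ = E + F := by rw [lpNorm_two_sub_comm, ← hEdef, ← hFdef]
  -- choose the bestApprox set S₀
  obtain ⟨S₀, S₀c, hS₀card, hS₀compl, hS₀σ⟩ := exists_S_bestApprox' n v
  have hσ0 : (0:ℝ) ≤ ∑ i ∈ S₀c, ‖v i‖ := by positivity
  have hσstar0 : 0 ≤ bestApprox n 1 v := le_trans hσ0 hS₀σ
  have hsplit₀ := sum_split' S₀ S₀c hS₀compl
  -- ℓ¹ estimate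
  have f1 : ∑ i ∈ S₀c, ‖(v - r) i‖ ≤ (∑ i ∈ S₀c, ‖v i‖) + ∑ i ∈ S₀c, ‖r i‖ := by
    rw [← Finset.sum_add_distrib]
    exact Finset.sum_le_sum fun i _ => norm_sub_le _ _
  have f2 : ∑ i ∈ S₀, ‖v i‖ ≤ (∑ i ∈ S₀, ‖r i‖) + ∑ i ∈ S₀, ‖(v - r) i‖ := by
    rw [← Finset.sum_add_distrib]
    refine Finset.sum_le_sum fun i _ => ?_
    have h := norm_sub_norm_le (v i) (r i)
    have h2 : (v - r) i = v i - r i := rfl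
    rw [← h2] at h
    linarith
  have hmin : (∑ i, ‖r i‖) + lam * F ≤ (∑ i, ‖v i‖) + lam * E := by
    have h := hr v
    rwa [lpNorm_one_eq, lpNorm_one_eq, ← hEdef, ← hFdef] at h
  have h1 : ∑ i ∈ S₀c, ‖(v - r) i‖ ≤
      (lam*E - lam*F) + 2*(∑ i ∈ S₀c, ‖v i‖) + ∑ i ∈ S₀, ‖(v - r) i‖ := by
    linarith [f1, f2, hsplit₀ v, hsplit₀ r, hmin]
  have h2 : ∑ i ∈ S₀, ‖(v - r) i‖ ≤
      ρ*(∑ i ∈ S₀c, ‖(v - r) i‖) + τ*sqn*G := by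
    have h := nsp_l1' A n hn ρ τ hA (v - r) S₀ S₀c hS₀compl hS₀card
    rwa [← hsqndef, ← hGdef] at h
  have hL1 : (∑ i ∈ S₀, ‖(v - r) i‖) + (∑ i ∈ S₀c, ‖(v - r) i‖) ≤
      C₁ * ((∑ i ∈ S₀c, ‖v i‖) + lam*E + sqn*E) := by
    rw [hC₁def]
    exact arithL1 ρ τ lam sqn E F _ _ _ G hρ0 hρ1 hτ hsqn hE0 hF0 hσ0 hlam2 hlam0 h1 h2 hGEF
  have hW1sum : ∑ i, ‖(v - r) i‖ =
      (∑ i ∈ S₀, ‖(v - r) i‖) + (∑ i ∈ S₀c, ‖(v - r) i‖) := hsplit₀ (v - r)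
  have hW10 : (0:ℝ) ≤ ∑ i, ‖(v - r) i‖ := by positivity
  have hL1' : ∑ i, ‖(v - r) i‖ ≤ C₁ * ((∑ i ∈ S₀c, ‖v i‖) + lam*E + sqn*E) := by
    rw [hW1sum]; exact hL1
  -- bound on F from minimality
  have hvtri : ∑ i, ‖v i‖ ≤ (∑ i, ‖r i‖) + ∑ i, ‖(v - r) i‖ := by
    rw [← Finset.sum_add_distrib]
    refine Finset.sum_le_sum fun i _ => ?_
    have h := norm_sub_norm_le (v i) (r i)
    have h2 : (v - r) i = v i - r i := rfl
    rw [← h2] at h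
    linarith
  have hlamF : lam * F ≤ (∑ i, ‖(v - r) i‖) + lam * E := by linarith [hmin, hvtri]
  have hτF : τ * F ≤ sqn⁻¹ * (∑ i, ‖(v - r) i‖) + τ * E := by
    have hτlam : τ / lam ≤ sqn⁻¹ := by
      rw [inv_eq_one_div, div_le_div_iff₀ hlam0 hsqn]
      nlinarith [hlam1]
    have hll : lam * lam⁻¹ = 1 := mul_inv_cancel₀ hlam0.ne'
    have e1 : τ * F = (τ/lam) * (lam * F) := by
      linear_combination (-(τ*F)) * hll
    have e2 : (τ/lam) * (lam*F) ≤ (τ/lam) * ((∑ i, ‖(v - r) i‖) + lam*E) :=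
      mul_le_mul_of_nonneg_left hlamF (by positivity)
    have e3 : (τ/lam) * ((∑ i, ‖(v - r) i‖) + lam*E)
        = (τ/lam)*(∑ i, ‖(v - r) i‖) + τ*E := by
      linear_combination (τ*E) * hll
    have e4 : (τ/lam)*(∑ i, ‖(v - r) i‖) ≤ sqn⁻¹*(∑ i, ‖(v - r) i‖) :=
      mul_le_mul_of_nonneg_right hτlam hW10
    linarith [e1.le, e2, e3.le, e4]
  -- ℓ² estimate
  obtain ⟨S₁, S₁c, hS₁card, hS₁compl, hS₁⟩ := exists_good_S' n hn (v - r)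
  rw [← hsqndef] at hS₁
  have htri2 := lpNorm_two_split_le S₁ S₁c hS₁compl (v - r)
  have hnsp2 : Real.sqrt (∑ i ∈ S₁, ‖(v - r) i‖^2) ≤
      ρ * sqn⁻¹ * (∑ i ∈ S₁c, ‖(v - r) i‖) + τ * G := by
    have h := nsp_l2' A n ρ τ hA (v - r) S₁ S₁c hS₁compl hS₁card
    rwa [← hsqndef, ← hGdef] at h
  have hcle : ∑ i ∈ S₁c, ‖(v - r) i‖ ≤ ∑ i, ‖(v - r) i‖ :=
    Finset.sum_le_sum_of_subset_of_nonneg (Finset.subset_univ _)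
      (fun i _ _ => norm_nonneg _)
  have hmono : ρ * sqn⁻¹ * (∑ i ∈ S₁c, ‖(v - r) i‖) ≤ ρ * sqn⁻¹ * ∑ i, ‖(v - r) i‖ :=
    mul_le_mul_of_nonneg_left hcle (mul_nonneg hρ0.le (inv_nonneg.mpr hsqn.le))
  have hτG : τ * G ≤ τ * E + τ * F := by
    have h := mul_le_mul_of_nonneg_left hGEF hτ.le
    linarith
  have hL2 : lpNorm 2 (v - r) ≤ (2+ρ)*(sqn⁻¹*(∑ i, ‖(v - r) i‖)) + 2*τ*E := by
    nlinarith [htri2, hnsp2, hτG, hτF, hS₁, hmono]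
  have hsinv : sqn⁻¹*(∑ i, ‖(v - r) i‖) ≤
      C₁*(sqn⁻¹*(∑ i ∈ S₀c, ‖v i‖) + lam*(sqn⁻¹*E) + E) := by
    have hs1 : sqn⁻¹ * (∑ i, ‖(v - r) i‖) ≤
        sqn⁻¹ * (C₁*((∑ i ∈ S₀c, ‖v i‖) + lam*E + sqn*E)) :=
      mul_le_mul_of_nonneg_left hL1' (inv_nonneg.mpr hsqn.le)
    have hinv : sqn⁻¹ * sqn = 1 := inv_mul_cancel₀ hsqn.ne'
    have hs2 : sqn⁻¹ * (C₁*((∑ i ∈ S₀c, ‖v i‖) + lam*E + sqn*E))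
        = C₁*(sqn⁻¹*(∑ i ∈ S₀c, ‖v i‖) + lam*(sqn⁻¹*E) + E) := by
      linear_combination (C₁*E) * hinv
    linarith [hs1, hs2.le]
  -- case split on p
  have hp' : p = 1 ∨ p = 2 := by simpa using hp
  have hlamE : 0 ≤ lam * E := mul_nonneg hlam0.le hE0
  have hsqnE : 0 ≤ sqn * E := mul_nonneg hsqn.le hE0
  rcases hp' with rfl | rfl
  · -- p = 1
    have e0 : ((n:ℝ)) ^ ((1:ℝ)/1 - 1) = 1 := by norm_num
    have ehalf : ((n:ℝ)) ^ (1 - (1:ℝ)/2) = sqn := by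
      rw [show (1 - (1:ℝ)/2) = (1/2 : ℝ) by norm_num, hsqndef, Real.sqrt_eq_rpow]
    have hgoal1 : lpNorm 1 (v - r) = (∑ i ∈ S₀, ‖(v - r) i‖) + (∑ i ∈ S₀c, ‖(v - r) i‖) := by
      rw [lpNorm_one_eq]; exact hsplit₀ (v - r)
    rw [e0, ehalf, hgoal1]
    have hXX : (∑ i ∈ S₀c, ‖v i‖) + lam*E + sqn*E ≤ bestApprox n 1 v + lam*E + sqn*E := by
      linarith [hS₀σ]
    have hX0 : 0 ≤ (∑ i ∈ S₀c, ‖v i‖) + lam*E + sqn*E := by linarith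
    have hfin : C₁ * ((∑ i ∈ S₀c, ‖v i‖) + lam*E + sqn*E) ≤
        C * (bestApprox n 1 v + lam*E + sqn*E) :=
      mul_le_mul hC₁C hXX hX0 hC.le
    calc (∑ i ∈ S₀, ‖(v - r) i‖) + (∑ i ∈ S₀c, ‖(v - r) i‖)
        ≤ C₁ * ((∑ i ∈ S₀c, ‖v i‖) + lam*E + sqn*E) := hL1
      _ ≤ C * (bestApprox n 1 v + lam*E + sqn*E) := hfin
      _ = C * (1 * bestApprox n 1 v + (lam * 1 + sqn) * E) := by ring
  · -- p = 2
    have e1 : ((n:ℝ)) ^ ((1:ℝ)/2 - 1) = sqn⁻¹ := by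
      rw [show ((1:ℝ)/2 - 1) = (-(1:ℝ)/2) by norm_num, rpow_neg_half_eq, hsqndef]
    have e2 : ((n:ℝ)) ^ (1 - (2:ℝ)/2) = 1 := by
      rw [show (1 - (2:ℝ)/2) = (0:ℝ) by norm_num, Real.rpow_zero]
    rw [e1, e2]
    have hσmono : sqn⁻¹*(∑ i ∈ S₀c, ‖v i‖) ≤ sqn⁻¹*bestApprox n 1 v :=
      mul_le_mul_of_nonneg_left hS₀σ (inv_nonneg.mpr hsqn.le)
    have hXX : sqn⁻¹*(∑ i ∈ S₀c, ‖v i‖) + lam*(sqn⁻¹*E) + E ≤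
        sqn⁻¹*bestApprox n 1 v + lam*(sqn⁻¹*E) + E := by linarith
    have hEX : E ≤ sqn⁻¹*bestApprox n 1 v + lam*(sqn⁻¹*E) + E := by
      have g1 : 0 ≤ sqn⁻¹*bestApprox n 1 v := mul_nonneg (inv_nonneg.mpr hsqn.le) hσstar0
      have g2 : 0 ≤ lam*(sqn⁻¹*E) := mul_nonneg hlam0.le (mul_nonneg (inv_nonneg.mpr hsqn.le) hE0)
      linarith
    have hm1 : (2+ρ)*(sqn⁻¹*(∑ i, ‖(v - r) i‖)) ≤
        (2+ρ)*(C₁*(sqn⁻¹*bestApprox n 1 v + lam*(sqn⁻¹*E) + E)) := by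
      apply mul_le_mul_of_nonneg_left _ (by linarith : (0:ℝ) ≤ 2+ρ)
      calc sqn⁻¹*(∑ i, ‖(v - r) i‖)
          ≤ C₁*(sqn⁻¹*(∑ i ∈ S₀c, ‖v i‖) + lam*(sqn⁻¹*E) + E) := hsinv
        _ ≤ C₁*(sqn⁻¹*bestApprox n 1 v + lam*(sqn⁻¹*E) + E) :=
            mul_le_mul_of_nonneg_left hXX hC₁.le
    have hm2 : 2*τ*E ≤ 2*τ*(sqn⁻¹*bestApprox n 1 v + lam*(sqn⁻¹*E) + E) :=
      mul_le_mul_of_nonneg_left hEX (by positivity)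
    calc lpNorm 2 (v - r) ≤ (2+ρ)*(sqn⁻¹*(∑ i, ‖(v - r) i‖)) + 2*τ*E := hL2
      _ ≤ (2+ρ)*(C₁*(sqn⁻¹*bestApprox n 1 v + lam*(sqn⁻¹*E) + E))
            + 2*τ*(sqn⁻¹*bestApprox n 1 v + lam*(sqn⁻¹*E) + E) := by linarith
      _ = C * (sqn⁻¹ * bestApprox n 1 v + (lam * sqn⁻¹ + 1) * E) := by rw [hCdef]; ring
end

section
/- Let A ∈ ℂ^{m×N}, Δ : ℂ^m → ℂ^N, p ≥ 1, and n ∈ ℕ with 4n < N. If (A,Δ) is p–n–instance-optimal with constant C_N, i.e., ‖z − Δ(Az)‖_{ℓ_p} ≤ C_N σ_n(z)_{ℓ_p} for all z ∈ ℂ^N, then m ≥ n·log(N/(4n)) / (4·log(2C_N + 3)). -/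
open scoped BigOperators
open scoped Classical

/-! ### Auxiliary material for the proof of `stmt10`. -/

open scoped ENNReal NNReal
open Module

section LpBasic

theorem lpNorm_eq_norm {p : ℝ} (hp : 1 ≤ p) {ι : Type*} [Fintype ι] (v : ι → ℂ) :
    lpNorm p v = @Norm.norm (PiLp (ENNReal.ofReal p) (fun _ : ι => ℂ)) _
      ((WithLp.equiv (ENNReal.ofReal p) (ι → ℂ)).symm v) := by
  rw [PiLp.norm_eq_sum]
  · simp only [lpNorm, ENNReal.toReal_ofReal (by linarith : (0:ℝ) ≤ p)]
    rfl
  · rw [ENNReal.toReal_ofReal (by linarith)]; linarith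

variable {p : ℝ} {ι : Type*} [Fintype ι]

theorem lpNorm_nonneg (v : ι → ℂ) : 0 ≤ lpNorm p v := by
  apply Real.rpow_nonneg
  apply Finset.sum_nonneg
  intro i _
  exact Real.rpow_nonneg (norm_nonneg _) _

theorem lpNorm_eq_zero (hp : 1 ≤ p) (v : ι → ℂ) (hv : lpNorm p v = 0) : v = 0 := by
  haveI : Fact (1 ≤ ENNReal.ofReal p) := ⟨by
    rw [← ENNReal.ofReal_one]; exact ENNReal.ofReal_le_ofReal hp⟩
  rw [lpNorm_eq_norm hp] at hv
  have := norm_eq_zero.mp hv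
  have h2 := congrArg (WithLp.equiv (ENNReal.ofReal p) (ι → ℂ)) this
  simpa using h2

theorem lpNorm_triangle (hp : 1 ≤ p) (u w : ι → ℂ) :
    lpNorm p (u + w) ≤ lpNorm p u + lpNorm p w := by
  haveI : Fact (1 ≤ ENNReal.ofReal p) := ⟨by
    rw [← ENNReal.ofReal_one]; exact ENNReal.ofReal_le_ofReal hp⟩
  rw [lpNorm_eq_norm hp, lpNorm_eq_norm hp, lpNorm_eq_norm hp, WithLp.equiv_symm_apply, WithLp.toLp_add]
  exact norm_add_le _ _

theorem lpNorm_congr (u w : ι → ℂ) (huw : ∀ i, ‖u i‖ = ‖w i‖) : lpNorm p u = lpNorm p w := by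
  unfold lpNorm
  congr 1
  exact Finset.sum_congr rfl fun i _ => by rw [huw]

theorem lpNorm_neg (u : ι → ℂ) : lpNorm p (-u) = lpNorm p u :=
  lpNorm_congr _ _ fun i => by simp

theorem lpNorm_mask_le (hp : 1 ≤ p) (T : Finset ι) (v : ι → ℂ) :
    lpNorm p (fun i => if i ∈ T then 0 else v i) ≤ lpNorm p v := by
  have hp0 : 0 < p := by linarith
  apply Real.rpow_le_rpow
  · apply Finset.sum_nonneg; intro i _; exact Real.rpow_nonneg (norm_nonneg _) _
  · apply Finset.sum_le_sum
    intro i _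
    apply Real.rpow_le_rpow (norm_nonneg _) _ hp0.le
    by_cases hi : i ∈ T <;> simp [hi]
  · positivity

theorem bestApprox_nonneg (n : ℕ) (v : ι → ℂ) : 0 ≤ bestApprox n p v := by
  apply Real.sInf_nonneg
  rintro t ⟨z, _, rfl⟩
  exact lpNorm_nonneg _

theorem bestApprox_le (n : ℕ) (v w : ι → ℂ) (hw : sparsity w ≤ n) :
    bestApprox n p v ≤ lpNorm p (v - w) := by
  apply csInf_le
  · exact ⟨0, fun t ⟨z, _, ht⟩ => ht ▸ lpNorm_nonneg _⟩
  · exact ⟨w, hw, rfl⟩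

theorem lpNorm_indicator [DecidableEq ι] (hp : 1 ≤ p) (S : Finset ι) {c : ℝ} (hc : 0 ≤ c) :
    lpNorm p (fun j => if j ∈ S then (c:ℂ) else 0) = ((S.card : ℝ) * c ^ p) ^ (1/p) := by
  have hp0 : 0 < p := by linarith
  unfold lpNorm
  congr 1
  have hterm : ∀ j : ι, ‖(if j ∈ S then (c:ℂ) else 0)‖ ^ p = if j ∈ S then c ^ p else 0 := by
    intro j
    by_cases hj : j ∈ S
    · simp [hj, Complex.norm_real, abs_of_nonneg hc]
    · simp [hj, Real.zero_rpow hp0.ne']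
  rw [Finset.sum_congr rfl fun j _ => hterm j, Finset.sum_ite_mem, Finset.univ_inter,
    Finset.sum_const, nsmul_eq_mul]

theorem lpNorm_indicator_diff_ge [DecidableEq ι] (hp : 1 ≤ p) (S T : Finset ι) {c : ℝ} (hc : 0 ≤ c) :
    ((((S \ T).card + (T \ S).card : ℕ) : ℝ) * c ^ p) ^ (1/p) ≤
      lpNorm p (fun j => (if j ∈ S then (c:ℂ) else 0) - (if j ∈ T then (c:ℂ) else 0)) := by
  have hp0 : 0 < p := by linarith
  unfold lpNorm
  apply Real.rpow_le_rpow (by positivity) _ (by positivity)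
  have hsub : ((S \ T) ∪ (T \ S)) ⊆ Finset.univ := Finset.subset_univ _
  have hdisj : Disjoint (S \ T) (T \ S) := disjoint_sdiff_sdiff
  calc (((S \ T).card + (T \ S).card : ℕ) : ℝ) * c ^ p
      = ∑ j ∈ (S \ T) ∪ (T \ S),
          ‖(if j ∈ S then (c:ℂ) else 0) - (if j ∈ T then (c:ℂ) else 0)‖ ^ p := by
        have hval : ∀ j ∈ (S \ T) ∪ (T \ S),
            ‖(if j ∈ S then (c:ℂ) else 0) - (if j ∈ T then (c:ℂ) else 0)‖ ^ p = c ^ p := by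
          intro j hj
          rcases Finset.mem_union.mp hj with hj1 | hj2
          · obtain ⟨hjS, hjT⟩ := Finset.mem_sdiff.mp hj1
            simp [hjS, hjT, Complex.norm_real, abs_of_nonneg hc]
          · obtain ⟨hjT, hjS⟩ := Finset.mem_sdiff.mp hj2
            simp [hjS, hjT, Complex.norm_real, abs_of_nonneg hc]
        rw [Finset.sum_congr rfl hval, Finset.sum_const, nsmul_eq_mul,
          Finset.card_union_of_disjoint hdisj]
    _ ≤ ∑ j, ‖(if j ∈ S then (c:ℂ) else 0) - (if j ∈ T then (c:ℂ) else 0)‖ ^ p := by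
        apply Finset.sum_le_sum_of_subset_of_nonneg hsub
        intro j _ _
        positivity

end LpBasic

section Recover

variable {m N : ℕ} {n : ℕ} {p : ℝ} {A : Matrix (Fin m) (Fin N) ℂ}
  {Δ : (Fin m → ℂ) → Fin N → ℂ} {CN : ℝ}

theorem sparsity_mask_le {ι : Type*} [Fintype ι] (T : Finset ι) (v : ι → ℂ)
    (hv : ∀ i, i ∉ T → v i = 0) : sparsity v ≤ T.card := by
  unfold sparsity
  apply Finset.card_le_card
  intro i hi
  simp only [Finset.mem_filter, Finset.mem_univ, true_and] at hi
  by_contra hiT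
  exact hi (hv i hiT)

theorem exact_recovery (hp : 1 ≤ p) (hC : 0 < CN)
    (h : ∀ z : Fin N → ℂ, lpNorm p (z - Δ (A.mulVec z)) ≤ CN * bestApprox n p z)
    (z : Fin N → ℂ) (hz : sparsity z ≤ n) : Δ (A.mulVec z) = z := by
  have hp0 : 0 < p := by linarith
  have h1 : bestApprox n p z ≤ 0 := by
    have := bestApprox_le (p := p) n z z hz
    have hz0 : lpNorm p (z - z) = 0 := by
      simp [lpNorm, Real.zero_rpow (by positivity : p ≠ 0),
        Real.zero_rpow (by positivity : p⁻¹ ≠ 0)]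
    rwa [hz0] at this
  have h2 : lpNorm p (z - Δ (A.mulVec z)) = 0 :=
    le_antisymm (le_trans (h z) (by nlinarith)) (lpNorm_nonneg _)
  have := lpNorm_eq_zero hp _ h2
  have h3 : z - Δ (A.mulVec z) = 0 := this
  rw [sub_eq_zero] at h3
  exact h3.symm

/-- Kernel null space property derived from instance optimality. -/
theorem kernel_nsp (hp : 1 ≤ p) (hC : 0 < CN)
    (h : ∀ z : Fin N → ℂ, lpNorm p (z - Δ (A.mulVec z)) ≤ CN * bestApprox n p z)
    (v : Fin N → ℂ) (hv : A.mulVec v = 0) (T : Finset (Fin N)) (hT : T.card ≤ 2 * n) :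
    lpNorm p v ≤ CN * lpNorm p (fun i => if i ∈ T then 0 else v i) := by
  obtain ⟨T1, hT1sub, hT1card⟩ := Finset.exists_subset_card_eq (s := T) (n := min n T.card) (min_le_right _ _)
  set T2 := T \ T1 with hT2
  have hT2card : T2.card ≤ n := by
    rw [hT2, Finset.card_sdiff_of_subset hT1sub, hT1card]
    omega
  have hT1card' : T1.card ≤ n := by rw [hT1card]; exact min_le_left _ _
  set z1 : Fin N → ℂ := fun i => if i ∈ T1 then v i else 0 with hz1
  set z2 : Fin N → ℂ := z1 - v with hz2d
  have hAz2 : A.mulVec z2 = A.mulVec z1 := by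
    rw [hz2d, Matrix.mulVec_sub, hv, sub_zero]
  have hrec : Δ (A.mulVec z1) = z1 := by
    apply exact_recovery hp hC h z1
    refine le_trans (sparsity_mask_le T1 z1 fun i hi => ?_) hT1card'
    simp [hz1, hi]
  have hz2 := h z2
  rw [hAz2, hrec] at hz2
  have e1 : lpNorm p (z2 - z1) = lpNorm p v := by
    apply lpNorm_congr
    intro i
    simp [hz2d, sub_sub_cancel_left, norm_neg]
  have e2 : bestApprox n p z2 ≤ lpNorm p (fun i => if i ∈ T then 0 else v i) := by
    have hb := bestApprox_le (p := p) n z2 (fun i => if i ∈ T2 then z2 i else 0)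
      (le_trans (sparsity_mask_le T2 _ fun i hi => by simp [hi]) hT2card)
    refine le_trans hb (le_of_eq (lpNorm_congr _ _ fun i => ?_))
    by_cases hiT : i ∈ T
    · by_cases hi2 : i ∈ T2
      · simp [hi2, hiT]
      · have hi1 : i ∈ T1 := by
          rw [hT2] at hi2
          simp only [Finset.mem_sdiff, hiT, true_and, not_not] at hi2
          exact hi2
        simp [hi2, hi1, hiT, hz2d, hz1]
    · have hi2 : i ∉ T2 := fun hc => hiT (Finset.mem_sdiff.mp hc).1
      have hi1 : i ∉ T1 := fun hc => hiT (hT1sub hc)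
      simp [hi2, hi1, hiT, hz2d, hz1]
  calc lpNorm p v = lpNorm p (z2 - z1) := e1.symm
    _ ≤ CN * bestApprox n p z2 := hz2
    _ ≤ CN * lpNorm p (fun i => if i ∈ T then 0 else v i) := by
        exact mul_le_mul_of_nonneg_left e2 hC.le

end Recover

section Packing

open Metric MeasureTheory

theorem packing_card_le {E : Type*} [NormedAddCommGroup E] [NormedSpace ℝ E]
    [FiniteDimensional ℝ E] (s : Finset E) {ε : ℝ} (hε : 0 < ε)
    (hs : ∀ c ∈ s, ‖c‖ ≤ 1) (h : ∀ c ∈ s, ∀ d ∈ s, c ≠ d → ε ≤ ‖c - d‖) :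
    (s.card : ℝ) ≤ ((2 + ε) / ε) ^ finrank ℝ E := by
  borelize E
  let μ : Measure E := Measure.addHaar
  set δ : ℝ := ε / 2 with hδ
  set ρ : ℝ := 1 + ε / 2 with hρ
  have δpos : 0 < δ := by positivity
  have ρpos : 0 < ρ := by positivity
  set A := ⋃ c ∈ s, ball (c : E) δ with hA
  have D : Set.Pairwise (s : Set E) (Function.onFun Disjoint fun c => ball (c : E) δ) := by
    rintro c hc d hd hcd
    apply ball_disjoint_ball
    rw [dist_eq_norm]
    have := h c hc d hd hcd
    rw [hδ]; linarith
  have A_subset : A ⊆ ball (0 : E) ρ := by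
    refine Set.iUnion₂_subset fun x hx => ?_
    apply ball_subset_ball'
    rw [dist_zero_right]
    have := hs x hx
    rw [hδ, hρ]; linarith
  have I :
      (s.card : ℝ≥0∞) * ENNReal.ofReal (δ ^ finrank ℝ E) * μ (ball 0 1) ≤
        ENNReal.ofReal (ρ ^ finrank ℝ E) * μ (ball 0 1) :=
    calc
      (s.card : ℝ≥0∞) * ENNReal.ofReal (δ ^ finrank ℝ E) * μ (ball 0 1) = μ A := by
        rw [hA, measure_biUnion_finset D fun c _ => measurableSet_ball]
        simp only [μ.addHaar_ball_of_pos _ δpos]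
        simp only [Finset.sum_const, nsmul_eq_mul, mul_assoc]
      _ ≤ μ (ball (0 : E) ρ) := measure_mono A_subset
      _ = ENNReal.ofReal (ρ ^ finrank ℝ E) * μ (ball 0 1) := by
        simp only [μ.addHaar_ball_of_pos _ ρpos]
  have J : (s.card : ℝ≥0∞) * ENNReal.ofReal (δ ^ finrank ℝ E) ≤
      ENNReal.ofReal (ρ ^ finrank ℝ E) :=
    (ENNReal.mul_le_mul_iff_left (measure_ball_pos _ _ zero_lt_one).ne' measure_ball_lt_top.ne).1 I
  have K : (s.card : ℝ) * δ ^ finrank ℝ E ≤ ρ ^ finrank ℝ E := by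
    have := ENNReal.toReal_le_of_le_ofReal (pow_nonneg ρpos.le _) J
    rw [ENNReal.toReal_mul, ENNReal.toReal_natCast,
      ENNReal.toReal_ofReal (pow_nonneg δpos.le _)] at this
    exact this
  have hδd : 0 < δ ^ finrank ℝ E := pow_pos δpos _
  rw [← le_div_iff₀ hδd] at K
  calc (s.card : ℝ) ≤ ρ ^ finrank ℝ E / δ ^ finrank ℝ E := K
    _ = ((2 + ε) / ε) ^ finrank ℝ E := by
        rw [← div_pow]
        congr 1
        rw [hρ, hδ]
        field_simp

end Packing

section Code

variable {n v : ℕ}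

theorem hamming_ball_card (hv : 2 ≤ v) (f : Fin n → Fin v) (e : ℕ) :
    ((Finset.univ.filter fun g : Fin n → Fin v => hammingDist g f ≤ e).card) ≤
      2 ^ n * (v - 1) ^ e := by
  classical
  set ball := Finset.univ.filter fun g : Fin n → Fin v => hammingDist g f ≤ e with hball
  have key := Finset.card_eq_sum_card_fiberwise
    (f := fun g : Fin n → Fin v => Finset.univ.filter fun i => g i ≠ f i)
    (s := ball) (t := (Finset.univ : Finset (Finset (Fin n))))
    (fun g _ => Finset.mem_univ _)
  rw [key]
  have hbound : ∀ D : Finset (Fin n),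
      (ball.filter fun g => (Finset.univ.filter fun i => g i ≠ f i) = D).card ≤ (v-1)^e := by
    intro D
    have hvpos : 0 < v - 1 := Nat.sub_pos_of_lt hv
    by_cases hne : (ball.filter fun g => (Finset.univ.filter fun i => g i ≠ f i) = D).Nonempty
    · obtain ⟨g0, hg0⟩ := hne
      simp only [Finset.mem_filter, hball, Finset.mem_univ, true_and] at hg0
      have hDe : D.card ≤ e := by
        rw [← hg0.2]
        exact hg0.1
      calc (ball.filter fun g => (Finset.univ.filter fun i => g i ≠ f i) = D).card
          ≤ (D.pi fun i => Finset.univ.erase (f i)).card := by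
            apply Finset.card_le_card_of_injOn (fun g => fun i _ => g i)
            · intro g hg
              simp only [Finset.mem_coe, Finset.mem_filter] at hg
              rw [Finset.mem_coe, Finset.mem_pi]
              intro i hi
              rw [← hg.2] at hi
              simp only [Finset.mem_filter, Finset.mem_univ, true_and] at hi
              exact Finset.mem_erase.mpr ⟨hi, Finset.mem_univ _⟩
            · intro g1 hg1 g2 hg2 heq
              simp only [Finset.mem_coe, Finset.mem_filter] at hg1 hg2
              funext i
              by_cases hi : i ∈ D
              · exact congrFun (congrFun heq i) hi
              · have h1 : g1 i = f i := by
                  by_contra hc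
                  exact hi (hg1.2 ▸ (by simp [hc]))
                have h2 : g2 i = f i := by
                  by_contra hc
                  exact hi (hg2.2 ▸ (by simp [hc]))
                rw [h1, h2]
        _ = ∏ i ∈ D, (Finset.univ.erase (f i)).card := by rw [Finset.card_pi]
        _ = (v-1) ^ D.card := by
            have hcd : ∀ i ∈ D, (Finset.univ.erase (f i)).card = v - 1 := by
              intro i _
              rw [Finset.card_erase_of_mem (Finset.mem_univ _), Finset.card_univ,
                Fintype.card_fin]
            rw [← Finset.prod_const]
            exact Finset.prod_congr rfl hcd
        _ ≤ (v-1) ^ e := Nat.pow_le_pow_right hvpos hDe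
    · rw [Finset.not_nonempty_iff_eq_empty] at hne
      simp [hne]
  calc ∑ D ∈ (Finset.univ : Finset (Finset (Fin n))),
        (ball.filter fun g => (Finset.univ.filter fun i => g i ≠ f i) = D).card
      ≤ ∑ _D ∈ (Finset.univ : Finset (Finset (Fin n))), (v-1)^e :=
        Finset.sum_le_sum fun D _ => hbound D
    _ = 2 ^ n * (v-1)^e := by
        simp [Finset.sum_const, Finset.card_univ, Fintype.card_finset]

theorem gv_code (hv : 2 ≤ v) {d : ℕ} (hd : 0 < d) :
    ∃ S : Finset (Fin n → Fin v), (∀ f ∈ S, ∀ g ∈ S, f ≠ g → d ≤ hammingDist f g) ∧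
      v ^ n ≤ S.card * (2 ^ n * (v - 1) ^ (d - 1)) := by
  classical
  set P : Finset (Fin n → Fin v) → Prop :=
    fun S => ∀ f ∈ S, ∀ g ∈ S, f ≠ g → d ≤ hammingDist f g with hP
  have hne : ((Finset.univ : Finset (Finset (Fin n → Fin v))).filter P).Nonempty := by
    refine ⟨∅, ?_⟩
    simp [hP]
  obtain ⟨S, hSmem, hSmax⟩ := Finset.exists_max_image _ Finset.card hne
  simp only [Finset.mem_filter, Finset.mem_univ, true_and] at hSmem
  refine ⟨S, hSmem, ?_⟩
  have hcover : ∀ g : Fin n → Fin v, ∃ f ∈ S, hammingDist g f ≤ d - 1 := by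
    intro g
    by_contra hc
    push_neg at hc
    have hgS : g ∉ S := fun hgS => by
      have := hc g hgS
      simp [hammingDist_self] at this
    have hins : P (insert g S) := by
      have hgf : ∀ f ∈ S, d ≤ hammingDist g f := fun f hf => by
        have := hc f hf; omega
      intro f1 h1 f2 h2 h12
      rcases Finset.mem_insert.mp h1 with h1e | h1m
      · rcases Finset.mem_insert.mp h2 with h2e | h2m
        · exact absurd (h1e.trans h2e.symm) h12
        · rw [h1e]; exact hgf f2 h2m
      · rcases Finset.mem_insert.mp h2 with h2e | h2m
        · rw [h2e, hammingDist_comm]; exact hgf f1 h1m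
        · exact hSmem f1 h1m f2 h2m h12
    have hle := hSmax (insert g S) (Finset.mem_filter.mpr ⟨Finset.mem_univ _, hins⟩)
    rw [Finset.card_insert_of_notMem hgS] at hle
    omega
  have hcov2 : (Finset.univ : Finset (Fin n → Fin v)) ⊆
      S.biUnion fun f => Finset.univ.filter fun g => hammingDist g f ≤ d - 1 := by
    intro g _
    obtain ⟨f, hf, hdist⟩ := hcover g
    exact Finset.mem_biUnion.mpr ⟨f, hf, by simp [hdist]⟩
  calc v ^ n = (Finset.univ : Finset (Fin n → Fin v)).card := by
        rw [Finset.card_univ, Fintype.card_fun, Fintype.card_fin, Fintype.card_fin]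
    _ ≤ (S.biUnion fun f => Finset.univ.filter fun g => hammingDist g f ≤ d - 1).card :=
        Finset.card_le_card hcov2
    _ ≤ ∑ f ∈ S, (Finset.univ.filter fun g => hammingDist g f ≤ d - 1).card :=
        Finset.card_biUnion_le
    _ ≤ ∑ _f ∈ S, 2 ^ n * (v - 1) ^ (d - 1) :=
        Finset.sum_le_sum fun f _ => hamming_ball_card hv f (d-1)
    _ = S.card * (2 ^ n * (v - 1) ^ (d - 1)) := by
        rw [Finset.sum_const, smul_eq_mul]

end Code

theorem gv_card_bound {n N v d L : ℕ} (hn : 0 < n) (hN : 4 * n < N) (hv : v = N / n)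
    (hd : d = n - n / 2) (hL : v ^ n ≤ L * (2 ^ n * (v - 1) ^ (d - 1))) :
    ((N : ℝ) / (4 * n)) ^ ((n : ℝ) / 2) ≤ (L : ℝ) := by
  have hv4 : 4 ≤ v := by
    rw [hv, Nat.le_div_iff_mul_le hn]
    omega
  have hnv : n * v ≤ N := by
    rw [hv, mul_comm]
    exact Nat.div_mul_le_self N n
  have hNlt : N < n * (v + 1) := by
    have h1 : n * v + N % n = N := by rw [hv]; exact Nat.div_add_mod N n
    have h2 : N % n < n := Nat.mod_lt N hn
    calc N = n * v + N % n := h1.symm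
      _ < n * v + n := by omega
      _ = n * (v + 1) := by ring
  have hnR : (0:ℝ) < n := by exact_mod_cast hn
  have hvR : (4:ℝ) ≤ v := by exact_mod_cast hv4
  have hNn : (N:ℝ) / n ≤ (v:ℝ) + 1 := by
    rw [div_le_iff₀ hnR]
    have : (N:ℝ) < n * ((v:ℝ) + 1) := by exact_mod_cast hNlt
    linarith
  have hNn0 : (0:ℝ) ≤ (N:ℝ) / n := by positivity
  set a : ℝ := Real.sqrt ((v:ℝ) + 1) with ha
  set b : ℝ := Real.sqrt ((v:ℝ) - 1) with hb
  have ha1 : 1 ≤ a := by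
    calc (1:ℝ) = Real.sqrt 1 := by simp
      _ ≤ a := Real.sqrt_le_sqrt (by linarith)
  have hb1 : 1 ≤ b := by
    calc (1:ℝ) = Real.sqrt 1 := by simp
      _ ≤ b := Real.sqrt_le_sqrt (by linarith)
  have hab : a * b ≤ (v:ℝ) := by
    rw [ha, hb, ← Real.sqrt_mul (by linarith)]
    rw [show ((v:ℝ)+1) * ((v:ℝ)-1) = (v:ℝ)^2 - 1 by ring]
    calc Real.sqrt ((v:ℝ)^2 - 1) ≤ Real.sqrt ((v:ℝ)^2) := Real.sqrt_le_sqrt (by linarith)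
      _ = v := by rw [Real.sqrt_sq (by linarith)]
  have hav : a ≤ (v:ℝ) := by
    rw [ha]
    calc Real.sqrt ((v:ℝ)+1) ≤ Real.sqrt ((v:ℝ)^2) := Real.sqrt_le_sqrt (by nlinarith)
      _ = v := by rw [Real.sqrt_sq (by linarith)]
  have e1 : ((N:ℝ)/n) ^ ((n:ℝ)/2) ≤ a ^ n := by
    have : ((N:ℝ)/n) ^ ((n:ℝ)/2) ≤ ((v:ℝ)+1) ^ ((n:ℝ)/2) :=
      Real.rpow_le_rpow hNn0 hNn (by positivity)
    refine le_trans this (le_of_eq ?_)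
    rw [ha, Real.sqrt_eq_rpow, ← Real.rpow_natCast (((v:ℝ)+1) ^ ((1:ℝ)/2)) n,
      ← Real.rpow_mul (by linarith)]
    congr 1
    ring
  have e2 : ((v:ℝ)-1) ^ (d-1) = b ^ (2*(d-1)) := by
    rw [hb, pow_mul, Real.sq_sqrt (by linarith)]
  have e3 : a ^ n * b ^ (2*(d-1)) ≤ (v:ℝ) ^ n := by
    have h2d : 2*(d-1) ≤ n - 1 := by
      rw [hd]
      omega
    have hbmono : b ^ (2*(d-1)) ≤ b ^ (n-1) := pow_le_pow_right₀ hb1 h2d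
    have han : a ^ n = a ^ (n-1) * a := by
      conv_lhs => rw [show n = (n-1) + 1 by omega]
      rw [pow_succ]
    calc a ^ n * b ^ (2*(d-1)) ≤ a ^ n * b ^ (n-1) := by
          apply mul_le_mul_of_nonneg_left hbmono (by positivity)
      _ = (a*b) ^ (n-1) * a := by rw [han, mul_pow]; ring
      _ ≤ (v:ℝ) ^ (n-1) * (v:ℝ) := by
          apply mul_le_mul (pow_le_pow_left₀ (by positivity) hab _) hav (by linarith)
            (by positivity)
      _ = (v:ℝ) ^ n := by
          conv_rhs => rw [show n = (n-1) + 1 by omega]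
          rw [pow_succ]
  have hLR : ((v:ℝ)) ^ n ≤ (L:ℝ) * (2 ^ n * ((v:ℝ) - 1) ^ (d-1)) := by
    have hcast : ((v:ℕ):ℝ) ^ n ≤ (L:ℝ) * (2 ^ n * (((v-1:ℕ)):ℝ) ^ (d-1)) := by
      exact_mod_cast hL
    rwa [Nat.cast_sub (by omega : 1 ≤ v), Nat.cast_one] at hcast
  have hvd : (0:ℝ) < ((v:ℝ)-1) ^ (d-1) := by
    apply pow_pos
    linarith
  have step : ((N:ℝ)/n) ^ ((n:ℝ)/2) ≤ (L:ℝ) * 2 ^ n := by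
    have h1 : ((N:ℝ)/n) ^ ((n:ℝ)/2) * ((v:ℝ)-1)^(d-1) ≤ (L:ℝ) * 2^n * ((v:ℝ)-1)^(d-1) := by
      calc ((N:ℝ)/n) ^ ((n:ℝ)/2) * ((v:ℝ)-1)^(d-1)
          = ((N:ℝ)/n) ^ ((n:ℝ)/2) * b^(2*(d-1)) := by rw [e2]
        _ ≤ a^n * b^(2*(d-1)) := mul_le_mul_of_nonneg_right e1 (by positivity)
        _ ≤ (v:ℝ)^n := e3
        _ ≤ (L:ℝ) * 2^n * ((v:ℝ)-1)^(d-1) := by rw [mul_assoc]; exact hLR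
    exact le_of_mul_le_mul_right h1 hvd
  have h4 : ((N:ℝ)/(4*n)) ^ ((n:ℝ)/2) = ((N:ℝ)/n) ^ ((n:ℝ)/2) / 2^n := by
    have hdiv : (N:ℝ)/(4*(n:ℝ)) = ((N:ℝ)/n) / 4 := by
      rw [div_div, mul_comm]
    rw [hdiv, Real.div_rpow hNn0 (by norm_num)]
    congr 1
    rw [show (4:ℝ) = 2^(2:ℕ) by norm_num, ← Real.rpow_natCast (2:ℝ) 2,
      ← Real.rpow_mul (by norm_num), ← Real.rpow_natCast (2:ℝ) n]
    congr 1
    push_cast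
    ring
  rw [h4, div_le_iff₀ (by positivity)] at *
  exact step

section Tset

variable {n v N : ℕ}

noncomputable def encF (hnv : n * v ≤ N) : Fin n → Fin v → Fin N :=
  fun i a => Fin.castLE hnv (finProdFinEquiv (i, a))

theorem encF_inj (hnv : n * v ≤ N) {i i' : Fin n} {a a' : Fin v}
    (h : encF hnv i a = encF hnv i' a') : i = i' ∧ a = a' := by
  unfold encF at h
  have h1 := Fin.castLE_injective hnv h
  have h2 := finProdFinEquiv.injective h1
  exact ⟨congrArg Prod.fst h2, congrArg Prod.snd h2⟩

noncomputable def Tset (hnv : n * v ≤ N) (f : Fin n → Fin v) : Finset (Fin N) :=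
  Finset.univ.image fun i => encF hnv i (f i)

theorem Tset_card (hnv : n * v ≤ N) (f : Fin n → Fin v) : (Tset hnv f).card = n := by
  rw [Tset, Finset.card_image_of_injective _ fun i i' hii => (encF_inj hnv hii).1,
    Finset.card_univ, Fintype.card_fin]

theorem Tset_sdiff (hnv : n * v ≤ N) (f g : Fin n → Fin v) :
    hammingDist f g ≤ ((Tset hnv f) \ (Tset hnv g)).card := by
  have hsub : (Finset.univ.filter fun i => f i ≠ g i).image (fun i => encF hnv i (f i)) ⊆
      (Tset hnv f) \ (Tset hnv g) := by
    intro j hj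
    obtain ⟨i, hi, rfl⟩ := Finset.mem_image.mp hj
    simp only [Finset.mem_filter, Finset.mem_univ, true_and] at hi
    refine Finset.mem_sdiff.mpr ⟨Finset.mem_image.mpr ⟨i, Finset.mem_univ _, rfl⟩, ?_⟩
    intro hc
    obtain ⟨i', _, hi'⟩ := Finset.mem_image.mp hc
    obtain ⟨hie, hae⟩ := encF_inj hnv hi'
    subst hie
    exact hi (hae ▸ rfl)
  have hdist : hammingDist f g = (Finset.univ.filter fun i => f i ≠ g i).card := by
    rfl
  calc hammingDist f g
      = ((Finset.univ.filter fun i => f i ≠ g i).image (fun i => encF hnv i (f i))).card := by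
        rw [Finset.card_image_of_injective _ fun i i' hii => (encF_inj hnv hii).1]
        exact hdist
    _ ≤ _ := Finset.card_le_card hsub

end Tset

/-- **Lower bound on the number of measurements for `p`–`n`–instance optimality**
(modification of Foucart–Rauhut, Thm. 11.6).  If `‖z − Δ(Az)‖_p ≤ C_N σ_n(z)_p`
for all `z ∈ ℂ^N`, then `m ≥ n log(N/4n) / (4 log(2 C_N + 3))`. -/
theorem stmt10 {m N : ℕ} (n : ℕ) (hn : 0 < n) (hN : 4 * n < N) (p : ℝ) (hp : 1 ≤ p)
    (A : Matrix (Fin m) (Fin N) ℂ) (Δ : (Fin m → ℂ) → Fin N → ℂ) (CN : ℝ) (hC : 0 < CN)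
    (h : ∀ z : Fin N → ℂ, lpNorm p (z - Δ (A.mulVec z)) ≤ CN * bestApprox n p z) :
    (m : ℝ) ≥ n * Real.log ((N : ℝ) / (4 * n)) / (4 * Real.log (2 * CN + 3)) := by
  classical
  have hp0 : 0 < p := by linarith
  have hnR : (0:ℝ) < n := by exact_mod_cast hn
  have hX1 : 1 < (N:ℝ) / (4 * n) := by
    rw [lt_div_iff₀ (by positivity)]
    have : (4 * n : ℝ) < N := by exact_mod_cast hN
    linarith
  have hY1 : 1 < 2 * CN + 3 := by linarith
  have hlogY : 0 < Real.log (2 * CN + 3) := Real.log_pos hY1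
  -- the code
  set v : ℕ := N / n with hv
  set d : ℕ := n - n / 2 with hd
  have hv4 : 4 ≤ v := by
    rw [hv, Nat.le_div_iff_mul_le hn]; omega
  have hnv : n * v ≤ N := by
    rw [hv, mul_comm]; exact Nat.div_mul_le_self N n
  have hd0 : 0 < d := by rw [hd]; omega
  have hnd : n ≤ d + d := by rw [hd]; omega
  obtain ⟨S, hSsep, hScard⟩ := gv_code (n := n) (by omega : 2 ≤ v) hd0
  have hgv : ((N:ℝ)/(4*n)) ^ ((n:ℝ)/2) ≤ (S.card : ℝ) :=
    gv_card_bound hn hN hv hd hScard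
  -- the sparse vectors
  set c : ℝ := ((n:ℝ)⁻¹) ^ ((1:ℝ)/p) with hcdef
  have hc0 : 0 ≤ c := by positivity
  have hcp : c ^ p = (n:ℝ)⁻¹ := by
    rw [hcdef, ← Real.rpow_mul (by positivity : (0:ℝ) ≤ (n:ℝ)⁻¹),
      one_div_mul_cancel hp0.ne', Real.rpow_one]
  set x : (Fin n → Fin v) → (Fin N → ℂ) :=
    fun f j => if j ∈ Tset hnv f then (c:ℂ) else 0 with hx
  have hxnorm : ∀ f, lpNorm p (x f) = 1 := by
    intro f
    show lpNorm p (fun j => if j ∈ Tset hnv f then (c:ℂ) else 0) = 1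
    rw [lpNorm_indicator hp _ hc0, Tset_card, hcp, mul_inv_cancel₀ hnR.ne', Real.one_rpow]
  have hxsep : ∀ f ∈ S, ∀ g ∈ S, f ≠ g → 1 ≤ lpNorm p (x f - x g) := by
    intro f hf g hg hfg
    have h1 : d ≤ (Tset hnv f \ Tset hnv g).card :=
      le_trans (hSsep f hf g hg hfg) (Tset_sdiff hnv f g)
    have h2 : d ≤ (Tset hnv g \ Tset hnv f).card := by
      refine le_trans ?_ (Tset_sdiff hnv g f)
      rw [hammingDist_comm]
      exact hSsep f hf g hg hfg
    have hge := lpNorm_indicator_diff_ge hp (Tset hnv f) (Tset hnv g) hc0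
    have hcardsum : (n:ℝ) ≤
        (((Tset hnv f \ Tset hnv g).card + (Tset hnv g \ Tset hnv f).card : ℕ) : ℝ) := by
      have : n ≤ (Tset hnv f \ Tset hnv g).card + (Tset hnv g \ Tset hnv f).card := by
        calc n ≤ d + d := hnd
          _ ≤ _ := add_le_add h1 h2
      exact_mod_cast this
    have hx12 : x f - x g =
        fun j => (if j ∈ Tset hnv f then (c:ℂ) else 0) - (if j ∈ Tset hnv g then (c:ℂ) else 0) :=
      rfl
    rw [hx12]
    have hone : (1:ℝ) = ((n:ℝ) * c ^ p) ^ (1/p) := by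
      rw [hcp, mul_inv_cancel₀ hnR.ne', Real.one_rpow]
    refine le_trans (le_of_eq hone) (le_trans ?_ hge)
    apply Real.rpow_le_rpow (by positivity) _ (by positivity)
    apply mul_le_mul_of_nonneg_right hcardsum
    rw [hcp]
    positivity
  -- PiLp setup
  set q : ℝ≥0∞ := ENNReal.ofReal p with hq
  haveI : Fact (1 ≤ q) := ⟨by rw [hq, ← ENNReal.ofReal_one]; exact ENNReal.ofReal_le_ofReal hp⟩
  set E := PiLp q (fun _ : Fin N => ℂ) with hE
  let φ : E ≃ₗ[ℂ] (Fin N → ℂ) := WithLp.linearEquiv q ℂ (Fin N → ℂ)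
  haveI : FiniteDimensional ℂ E := Module.Finite.equiv φ.symm
  let K : Submodule ℂ E := LinearMap.ker ((Matrix.mulVecLin A).comp φ.toLinearMap)
  haveI hKc : IsClosed (K : Set E) := Submodule.closed_of_finiteDimensional K
  have hEnorm : ∀ u : Fin N → ℂ, ‖φ.symm u‖ = lpNorm p u := by
    intro u
    rw [lpNorm_eq_norm hp]
    rfl
  let π : E →ₗ[ℂ] E ⧸ K := K.mkQ
  set ε : ℝ := 1 / (1 + CN) with hε
  have hε0 : 0 < ε := by rw [hε]; positivity
  let y : (Fin n → Fin v) → E := fun f => φ.symm (x f)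
  have hwEq : ∀ f g, φ (y f - y g) = x f - x g := by
    intro f g
    show φ (φ.symm (x f) - φ.symm (x g)) = x f - x g
    rw [map_sub, LinearEquiv.apply_symm_apply, LinearEquiv.apply_symm_apply]
  have hπsep : ∀ f ∈ S, ∀ g ∈ S, f ≠ g → ε ≤ ‖π (y f) - π (y g)‖ := by
    intro f hf g hg hfg
    by_contra hlt
    push_neg at hlt
    have hππ : π (y f) - π (y g) = π (y f - y g) := (map_sub π _ _).symm
    rw [hππ] at hlt
    obtain ⟨z, hzmk, hznorm⟩ :=
      Submodule.Quotient.norm_mk_lt (π (y f - y g)) (sub_pos.mpr hlt)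
    have hzlt : ‖z‖ < ε := by linarith
    have hmem : z - (y f - y g) ∈ K := by
      have : (Submodule.Quotient.mk z : E ⧸ K) = Submodule.Quotient.mk (y f - y g) := hzmk
      exact (Submodule.Quotient.eq K).mp this
    set k : Fin N → ℂ := φ z - (x f - x g) with hk
    have hkk : A.mulVec k = 0 := by
      rw [LinearMap.mem_ker, LinearMap.comp_apply] at hmem
      have hφ : φ.toLinearMap (z - (y f - y g)) = k := by
        rw [hk]
        show φ (z - (y f - y g)) = φ z - (x f - x g)
        rw [map_sub, hwEq]
      rw [hφ] at hmem
      rw [← Matrix.mulVecLin_apply]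
      exact hmem
    set T : Finset (Fin N) := Tset hnv f ∪ Tset hnv g with hT
    have hTcard : T.card ≤ 2 * n := by
      calc T.card ≤ (Tset hnv f).card + (Tset hnv g).card := Finset.card_union_le _ _
        _ = 2 * n := by rw [Tset_card, Tset_card]; ring
    have hnsp := kernel_nsp hp hC h k hkk T hTcard
    have hmask : lpNorm p (fun i => if i ∈ T then 0 else k i) ≤ lpNorm p (φ z) := by
      refine le_trans (le_of_eq (lpNorm_congr _ _ fun i => ?_)) (lpNorm_mask_le hp T (φ z))
      by_cases hiT : i ∈ T
      · simp [hiT]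
      · have hif : i ∉ Tset hnv f := fun hc => hiT (Finset.mem_union_left _ hc)
        have hig : i ∉ Tset hnv g := fun hc => hiT (Finset.mem_union_right _ hc)
        simp only [hiT, if_false]
        have hki : k i = φ z i := by
          rw [hk]
          show φ z i - ((x f) i - (x g) i) = φ z i
          have hxf : (x f) i = 0 := by
            show (if i ∈ Tset hnv f then (c:ℂ) else 0) = 0
            simp [hif]
          have hxg : (x g) i = 0 := by
            show (if i ∈ Tset hnv g then (c:ℂ) else 0) = 0
            simp [hig]
          rw [hxf, hxg]
          ring
        rw [hki]
    have hφz : lpNorm p (φ z) = ‖z‖ := by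
      rw [← hEnorm (φ z), LinearEquiv.symm_apply_apply]
    have hxfg : x f - x g = φ z - k := by rw [hk, sub_sub_cancel]
    have htri : lpNorm p (x f - x g) ≤ lpNorm p (φ z) + lpNorm p k := by
      rw [hxfg, sub_eq_add_neg]
      refine le_trans (lpNorm_triangle hp _ _) ?_
      rw [lpNorm_neg]
    have hlow : (1:ℝ) ≤ lpNorm p (x f - x g) := hxsep f hf g hg hfg
    have hup : lpNorm p (x f - x g) < 1 := by
      calc lpNorm p (x f - x g) ≤ lpNorm p (φ z) + lpNorm p k := htri
        _ ≤ lpNorm p (φ z) + CN * lpNorm p (fun i => if i ∈ T then 0 else k i) :=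
            add_le_add_right hnsp _
        _ ≤ lpNorm p (φ z) + CN * lpNorm p (φ z) := by
            have := mul_le_mul_of_nonneg_left hmask hC.le
            linarith
        _ = (1 + CN) * ‖z‖ := by rw [hφz]; ring
        _ < (1 + CN) * ε := by
            apply mul_lt_mul_of_pos_left hzlt (by linarith)
        _ = 1 := by rw [hε]; field_simp
    linarith
  -- the packing
  set sQ : Finset (E ⧸ K) := S.image (fun f => π (y f)) with hsQ
  have hinj : Set.InjOn (fun f => π (y f)) ↑S := by
    intro f hf g hg he
    by_contra hfg
    have := hπsep f hf g hg hfg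
    rw [show π (y f) = π (y g) from he, sub_self, norm_zero] at this
    linarith
  have hsQcard : sQ.card = S.card := Finset.card_image_of_injOn hinj
  have hQle : ∀ cq ∈ sQ, ‖cq‖ ≤ 1 := by
    intro cq hcq
    obtain ⟨f, hf, rfl⟩ := Finset.mem_image.mp hcq
    calc ‖π (y f)‖ ≤ ‖y f‖ := Submodule.Quotient.norm_mk_le K (y f)
      _ = 1 := by
          show ‖φ.symm (x f)‖ = 1
          rw [hEnorm, hxnorm]
  have hQsep : ∀ cq ∈ sQ, ∀ dq ∈ sQ, cq ≠ dq → ε ≤ ‖cq - dq‖ := by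
    intro cq hcq dq hdq hne
    obtain ⟨f, hf, rfl⟩ := Finset.mem_image.mp hcq
    obtain ⟨g, hg, rfl⟩ := Finset.mem_image.mp hdq
    exact hπsep f hf g hg (fun hfg => hne (by rw [hfg]))
  have hpack := packing_card_le sQ hε0 hQle hQsep
  -- dimension bound
  have hdimE : finrank ℂ E = N := by
    rw [LinearEquiv.finrank_eq φ, Module.finrank_fin_fun]
  have h2rk : finrank ℝ (E ⧸ K) = 2 * finrank ℂ (E ⧸ K) := by
    rw [← Module.finrank_mul_finrank ℝ ℂ (E ⧸ K), Complex.finrank_real_complex]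
  have hrange : finrank ℂ (E ⧸ K) ≤ m := by
    have hq1 := Submodule.finrank_quotient_add_finrank K
    have hq2 := LinearMap.finrank_range_add_finrank_ker
      ((Matrix.mulVecLin A).comp φ.toLinearMap)
    have hq3 : finrank ℂ (LinearMap.range ((Matrix.mulVecLin A).comp φ.toLinearMap)) ≤ m := by
      have := Submodule.finrank_le (LinearMap.range ((Matrix.mulVecLin A).comp φ.toLinearMap))
      rwa [Module.finrank_fin_fun] at this
    have hKeq : finrank ℂ K =
        finrank ℂ (LinearMap.ker ((Matrix.mulVecLin A).comp φ.toLinearMap)) := rfl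
    omega
  have hdQ : finrank ℝ (E ⧸ K) ≤ 2 * m := by
    rw [h2rk]
    exact Nat.mul_le_mul_left 2 hrange
  -- base identity
  have hbase : (2 + ε) / ε = 2 * CN + 3 := by
    rw [hε]
    field_simp
    ring
  have hfinpow : ((2 + ε)/ε) ^ finrank ℝ (E ⧸ K) ≤ (2 * CN + 3) ^ (2 * m) := by
    rw [hbase]
    exact pow_le_pow_right₀ (by linarith) hdQ
  have main : ((N:ℝ)/(4*n)) ^ ((n:ℝ)/2) ≤ (2 * CN + 3) ^ (2 * m) := by
    calc ((N:ℝ)/(4*n)) ^ ((n:ℝ)/2) ≤ (S.card : ℝ) := hgv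
      _ = (sQ.card : ℝ) := by rw [hsQcard]
      _ ≤ ((2 + ε)/ε) ^ finrank ℝ (E ⧸ K) := hpack
      _ ≤ _ := hfinpow
  -- take logarithms
  have hlog := Real.log_le_log (by positivity) main
  rw [Real.log_rpow (by positivity), Real.log_pow] at hlog
  rw [ge_iff_le, div_le_iff₀ (by positivity)]
  push_cast at hlog
  nlinarith [hlog]
end
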